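/- For every n ≥ 1, the kernel P_t(x, y) := (t/(2√π)) ∫₀^∞ u^{−3/2} e^{−t²/(4u)} p_u(x, y) du, where p_u(x, y) = (4πu)^{-n/2} e^{−x₁−y₁} e^{−u} e^{−|x−y|²/(4u)}, satisfies: there exists C = C(n) such that for all x, y with |x − y| > 1 and all t > 0, ∫₀^∞ p_u(x, y) du/u ≤ C · e^{−x₁ − y₁ − |x − y|} · |x − y|^{−(n+1)/2}. -/

import Mathlib

open Real MeasureTheory Set

lemma aux_invGamma {s a : ℝ} (hs : 0 < s) (ha : 0 < a) :
    IntegrableOn (fun u : ℝ => u ^ (-s - 1) * Real.exp (-(a / u))) (Ioi 0) ∧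
      ∫ u in Ioi 0, u ^ (-s - 1) * Real.exp (-(a / u)) = (1 / a) ^ s * Real.Gamma s := by
  set g : ℝ → ℝ := fun y => y ^ (s - 1) * Real.exp (-(a * y)) with hgdef
  have hg : IntegrableOn g (Ioi 0) := by
    have h := integrableOn_rpow_mul_exp_neg_mul_rpow (s := s - 1) (p := 1) (by linarith) one_pos ha
    refine h.congr_fun (fun x hx => ?_) measurableSet_Ioi
    simp [g, Real.rpow_one]
  have key : ∀ x : ℝ, x ∈ Ioi (0:ℝ) →
      x ^ ((-1 : ℝ) - 1) • g (x ^ (-1 : ℝ)) = x ^ (-s - 1) * Real.exp (-(a / x)) := by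
    intro x hx
    have hx0 : (0:ℝ) < x := hx
    have h2 : (x ^ ((-1):ℝ)) ^ (s - 1) = x ^ (-(s-1)) := by
      rw [← Real.rpow_mul hx0.le]; norm_num
    simp only [hgdef, smul_eq_mul]
    rw [h2, Real.rpow_neg_one, ← div_eq_mul_inv, ← mul_assoc, ← Real.rpow_add hx0,
      show (-1:ℝ)-1 + -(s-1) = -s-1 by ring]
  constructor
  · have h := (integrableOn_Ioi_comp_rpow_iff' g (p := (-1:ℝ)) (by norm_num)).mpr hg
    exact h.congr_fun (fun x hx => key x hx) measurableSet_Ioi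
  · rw [← Real.integral_rpow_mul_exp_neg_mul_Ioi hs ha]
    rw [← integral_comp_rpow_Ioi g (p := (-1:ℝ)) (by norm_num)]
    refine setIntegral_congr_fun measurableSet_Ioi (fun x hx => ?_)
    rw [← key x hx]
    simp

lemma aux_gauss {r : ℝ} (hr : 0 < r) (c : ℝ) :
    Integrable (fun u : ℝ => Real.exp (-(1/r) * (u - c)^2)) ∧
      ∫ u in Ioi (0:ℝ), Real.exp (-(1/r) * (u - c)^2) ≤ Real.sqrt π * Real.sqrt r := by
  have hb : (0:ℝ) < 1/r := by positivity
  have hint : Integrable (fun u : ℝ => Real.exp (-(1/r) * (u - c)^2)) :=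
    (integrable_exp_neg_mul_sq hb).comp_sub_right c
  refine ⟨hint, ?_⟩
  have h1 : (∫ u in Ioi (0:ℝ), Real.exp (-(1/r) * (u - c)^2)) ≤
      ∫ u : ℝ, Real.exp (-(1/r) * (u - c)^2) :=
    setIntegral_le_integral hint (ae_of_all _ fun u => (Real.exp_pos _).le)
  have h2 : (∫ u : ℝ, Real.exp (-(1/r) * (u - c)^2)) = Real.sqrt (π / (1/r)) := by
    rw [integral_sub_right_eq_self (fun u => Real.exp (-(1/r) * u^2)) c]
    exact integral_gaussian (1/r)
  calc (∫ u in Ioi (0:ℝ), Real.exp (-(1/r) * (u - c)^2)) ≤ _ := h1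
    _ = Real.sqrt (π * r) := by rw [h2]; congr 1; field_simp
    _ = Real.sqrt π * Real.sqrt r := Real.sqrt_mul pi_pos.le r

lemma aux_exp4 : (∫ u in Ioi (0:ℝ), Real.exp (-((4:ℝ)⁻¹ * u))) = 4 := by
  rw [integral_comp_mul_left_Ioi (fun x => Real.exp (-x)) 0 (by norm_num : (0:ℝ) < 4⁻¹)]
  rw [mul_zero, integral_exp_neg_Ioi_zero]; norm_num

set_option maxHeartbeats 1000000 in
lemma key_est (s r q : ℝ) (hs : 0 < s) (hr1 : 1 < r) (hq1 : -s - 1 ≤ q)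
    (hq2 : -(2*s) ≤ q) (hq3 : q = -s - 1 + 1/2) :
    (∫ u in Ioi (0:ℝ), u ^ (-s - 1) * Real.exp (-((2*u - r)^2/(4*u)))) ≤
      (Real.Gamma s * 16 ^ s + 4 ^ (s+1) * Real.sqrt π + 4 ^ (s+2)) * r ^ q := by
  have hr0 : (0:ℝ) < r := lt_trans one_pos hr1
  have ha : (0:ℝ) < r^2/16 := by positivity
  obtain ⟨hint1, hval1⟩ := aux_invGamma hs ha
  obtain ⟨hint2, hval2⟩ := aux_gauss hr0 (r/2)
  have hint3 : IntegrableOn (fun u : ℝ => Real.exp (-((4:ℝ)⁻¹ * u))) (Ioi (0:ℝ)) := by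
    have h := exp_neg_integrableOn_Ioi 0 (by norm_num : (0:ℝ) < 4⁻¹)
    exact h.congr_fun (fun x _ => by simp only [neg_mul]) measurableSet_Ioi
  have hc20 : (0:ℝ) ≤ (r/4) ^ (-s - 1) := Real.rpow_nonneg (by positivity) _
  set c2 : ℝ := (r/4) ^ (-s - 1) with hc2def
  have hc20 : 0 ≤ c2 := Real.rpow_nonneg (by positivity) _
  set G : ℝ → ℝ := fun u => u ^ (-s-1) * Real.exp (-((r^2/16)/u)) +
      (c2 * Real.exp (-(1/r) * (u - r/2)^2) + c2 * Real.exp (-((4:ℝ)⁻¹ * u))) with hGdef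
  have hintG : IntegrableOn G (Ioi (0:ℝ)) :=
    hint1.add ((hint2.integrableOn.const_mul c2).add (hint3.const_mul c2))
  have hFnn : ∀ u ∈ Ioi (0:ℝ), 0 ≤ u ^ (-s - 1) * Real.exp (-((2*u - r)^2/(4*u))) := fun u hu =>
    mul_nonneg (Real.rpow_nonneg (le_of_lt hu) _) (Real.exp_pos _).le
  have hFG : ∀ u ∈ Ioi (0:ℝ), u ^ (-s - 1) * Real.exp (-((2*u - r)^2/(4*u))) ≤ G u := by
    intro u hu
    have hu0 : (0:ℝ) < u := hu
    simp only [hGdef]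
    have hg1nn : 0 ≤ u ^ (-s-1) * Real.exp (-((r^2/16)/u)) :=
      mul_nonneg (Real.rpow_nonneg hu0.le _) (Real.exp_pos _).le
    have hg2nn : 0 ≤ c2 * Real.exp (-(1/r) * (u - r/2)^2) :=
      mul_nonneg hc20 (Real.exp_pos _).le
    have hg3nn : 0 ≤ c2 * Real.exp (-((4:ℝ)⁻¹ * u)) :=
      mul_nonneg hc20 (Real.exp_pos _).le
    rcases le_or_gt u (r/4) with h | h
    · have h1 : (r^2/16)/u ≤ (2*u - r)^2/(4*u) := by
        rw [div_le_div_iff₀ hu0 (by positivity)]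
        nlinarith [mul_nonneg (mul_nonneg hu0.le (show (0:ℝ) ≤ 3*r/2 - 2*u by linarith))
          (show (0:ℝ) ≤ r/2 - 2*u by linarith)]
      have hmain : u ^ (-s-1) * Real.exp (-((2*u - r)^2/(4*u))) ≤
          u ^ (-s-1) * Real.exp (-((r^2/16)/u)) :=
        mul_le_mul_of_nonneg_left (Real.exp_le_exp.mpr (by linarith))
          (Real.rpow_nonneg hu0.le _)
      linarith
    · have hb : u ^ (-s-1) ≤ c2 := by
        rw [hc2def]
        exact Real.rpow_le_rpow_of_nonpos (by positivity) h.le (by linarith)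
      rcases le_or_gt u r with h2 | h2
      · have he : (1/r) * (u - r/2)^2 = (2*u - r)^2/(4*r) := by
          field_simp
          ring
        have hd : (2*u-r)^2/(4*r) ≤ (2*u-r)^2/(4*u) := by
          rw [div_le_div_iff₀ (by positivity) (by positivity)]
          nlinarith [sq_nonneg (2*u - r)]
        have hmain : u ^ (-s-1) * Real.exp (-((2*u - r)^2/(4*u))) ≤
            c2 * Real.exp (-(1/r) * (u - r/2)^2) :=
          mul_le_mul hb (Real.exp_le_exp.mpr (by linarith)) (Real.exp_pos _).le hc20
        linarith
      · have hd : (4:ℝ)⁻¹ * u ≤ (2*u - r)^2/(4*u) := by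
          rw [le_div_iff₀ (by positivity)]
          nlinarith
        have hmain : u ^ (-s-1) * Real.exp (-((2*u - r)^2/(4*u))) ≤
            c2 * Real.exp (-((4:ℝ)⁻¹ * u)) :=
          mul_le_mul hb (Real.exp_le_exp.mpr (by linarith)) (Real.exp_pos _).le hc20
        linarith
  have hmono : (∫ u in Ioi (0:ℝ), u ^ (-s - 1) * Real.exp (-((2*u - r)^2/(4*u)))) ≤ ∫ u in Ioi (0:ℝ), G u := by
    refine integral_mono_of_nonneg ?_ hintG ?_
    · exact (ae_restrict_iff' measurableSet_Ioi).mpr (ae_of_all _ hFnn)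
    · exact (ae_restrict_iff' measurableSet_Ioi).mpr (ae_of_all _ hFG)
  have hGval : (∫ u in Ioi (0:ℝ), G u) =
      (1/(r^2/16)) ^ s * Real.Gamma s +
        (c2 * (∫ u in Ioi (0:ℝ), Real.exp (-(1/r) * (u - r/2)^2)) + c2 * 4) := by
    have hint2' : IntegrableOn (fun u : ℝ => c2 * Real.exp (-(1/r) * (u - r/2)^2)) (Ioi (0:ℝ)) :=
      hint2.integrableOn.const_mul c2
    have hint3' : IntegrableOn (fun u : ℝ => c2 * Real.exp (-((4:ℝ)⁻¹ * u))) (Ioi (0:ℝ)) :=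
      hint3.const_mul c2
    have hint23 : IntegrableOn (fun u : ℝ => c2 * Real.exp (-(1/r) * (u - r/2)^2) +
        c2 * Real.exp (-((4:ℝ)⁻¹ * u))) (Ioi (0:ℝ)) := hint2'.add hint3'
    simp only [hGdef]
    rw [integral_add hint1 hint23, integral_add hint2' hint3',
      integral_const_mul, integral_const_mul, hval1, aux_exp4]
  have hsqrt : Real.sqrt r = r ^ (1/(2:ℝ)) := Real.sqrt_eq_rpow r
  have hb1 : (1/(r^2/16)) ^ s * Real.Gamma s ≤ Real.Gamma s * 16 ^ s * r ^ q := by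
    have h1 : (1/(r^2/16)) = 16 / r^2 := by field_simp
    have h2 : ((16:ℝ) / r^2) ^ s = 16 ^ s / (r^2) ^ s :=
      Real.div_rpow (by norm_num) (by positivity) s
    have h3 : ((r^2:ℝ)) ^ s = r ^ (2*s) := by
      rw [← Real.rpow_natCast r 2, ← Real.rpow_mul hr0.le]
      norm_num
    have h4 : r ^ (-(2*s)) ≤ r ^ q := Real.rpow_le_rpow_of_exponent_le hr1.le hq2
    have hG0 : (0:ℝ) < Real.Gamma s := Real.Gamma_pos_of_pos hs
    calc (1/(r^2/16)) ^ s * Real.Gamma s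
        = Real.Gamma s * 16 ^ s * r ^ (-(2*s)) := by
          rw [h1, h2, h3, Real.rpow_neg hr0.le, div_eq_mul_inv]
          ring
      _ ≤ Real.Gamma s * 16 ^ s * r ^ q := by
          apply mul_le_mul_of_nonneg_left h4
          positivity
  have hc2eq : c2 = 4 ^ (s+1) * r ^ (-s-1) := by
    rw [hc2def, show -s-1 = -(s+1) by ring, Real.div_rpow hr0.le (by norm_num : (0:ℝ) ≤ 4),
      Real.rpow_neg (by norm_num : (0:ℝ) ≤ 4), div_eq_mul_inv, inv_inv, mul_comm]
  have hb2 : c2 * (∫ u in Ioi (0:ℝ), Real.exp (-(1/r) * (u - r/2)^2)) ≤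
      4 ^ (s+1) * Real.sqrt π * r ^ q := by
    have h7 : r ^ (-s-1) * r ^ (1/(2:ℝ)) = r ^ q := by
      rw [← Real.rpow_add hr0, hq3]
    calc c2 * (∫ u in Ioi (0:ℝ), Real.exp (-(1/r) * (u - r/2)^2))
        ≤ c2 * (Real.sqrt π * Real.sqrt r) := mul_le_mul_of_nonneg_left hval2 hc20
      _ = 4 ^ (s+1) * Real.sqrt π * (r ^ (-s-1) * r ^ (1/(2:ℝ))) := by
          rw [hc2eq, hsqrt]
          ring
      _ = 4 ^ (s+1) * Real.sqrt π * r ^ q := by rw [h7]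
  have hb3 : c2 * 4 ≤ 4 ^ (s+2) * r ^ q := by
    have h8 : r ^ (-s-1) ≤ r ^ q := Real.rpow_le_rpow_of_exponent_le hr1.le hq1
    have h9 : (4:ℝ) ^ (s+2) = 4 ^ (s+1) * 4 := by
      rw [show s+2 = (s+1)+1 by ring, Real.rpow_add (by norm_num : (0:ℝ) < 4), Real.rpow_one]
    calc c2 * 4 = 4 ^ (s+1) * 4 * r ^ (-s-1) := by rw [hc2eq]; ring
      _ ≤ 4 ^ (s+1) * 4 * r ^ q := by
          apply mul_le_mul_of_nonneg_left h8
          positivity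
      _ = 4 ^ (s+2) * r ^ q := by rw [h9]
  have hFnn : ∀ u ∈ Ioi (0:ℝ), 0 ≤ u ^ (-s - 1) * Real.exp (-((2*u - r)^2/(4*u))) := fun u hu =>
    mul_nonneg (Real.rpow_nonneg (le_of_lt hu) _) (Real.exp_pos _).le
  calc (∫ u in Ioi (0:ℝ), u ^ (-s - 1) * Real.exp (-((2*u - r)^2/(4*u))))
      ≤ ∫ u in Ioi (0:ℝ), G u := hmono
    _ ≤ Real.Gamma s * 16^s * r^q + (4^(s+1) * Real.sqrt π * r^q + 4^(s+2) * r^q) := by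
        rw [hGval]
        exact add_le_add hb1 (add_le_add hb2 hb3)
    _ = (Real.Gamma s * 16 ^ s + 4 ^ (s+1) * Real.sqrt π + 4 ^ (s+2)) * r ^ q := by ring


set_option maxHeartbeats 1000000 in
theorem stmt9 (n : ℕ) (hn : 0 < n) :
    ∃ C : ℝ, 0 < C ∧ ∀ x y : EuclideanSpace ℝ (Fin n), ‖x - y‖ > 1 →
      (∫ u in Set.Ioi (0:ℝ),
          (4 * π * u) ^ (-(n : ℝ) / 2) * Real.exp (-x ⟨0, hn⟩ - y ⟨0, hn⟩) *
            Real.exp (-u) * Real.exp (-‖x - y‖ ^ 2 / (4 * u)) / u) ≤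
        C * Real.exp (-x ⟨0, hn⟩ - y ⟨0, hn⟩ - ‖x - y‖) * ‖x - y‖ ^ (-((n : ℝ) + 1) / 2) := by
  have hs : (0:ℝ) < (n:ℝ)/2 := by positivity
  set s : ℝ := (n:ℝ)/2 with hsdef
  have hn1 : (1:ℝ) ≤ (n:ℝ) := by exact_mod_cast hn
  refine ⟨Real.Gamma s * 16 ^ s + 4 ^ (s+1) * Real.sqrt π + 4 ^ (s+2), ?_, ?_⟩
  · have h1 := Real.Gamma_pos_of_pos hs
    have h2 : (0:ℝ) < Real.sqrt π := Real.sqrt_pos.mpr pi_pos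
    positivity
  intro x y hxy
  set r : ℝ := ‖x - y‖ with hrdef
  have hr1 : 1 < r := hxy
  have hr0 : 0 < r := lt_trans one_pos hr1
  set q : ℝ := -((n:ℝ) + 1) / 2 with hqdef
  have hq : -s - 1 ≤ q ∧ -(2*s) ≤ q ∧ q = -s - 1 + 1/2 :=
    ⟨by rw [hqdef, hsdef]; linarith, by rw [hqdef]; linarith, by rw [hqdef, hsdef]; linarith⟩
  set E : ℝ := Real.exp (-x ⟨0, hn⟩ - y ⟨0, hn⟩) with hEdef
  set F : ℝ → ℝ := fun u => u ^ (-s - 1) * Real.exp (-((2*u - r)^2/(4*u))) with hFdef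
  -- Step A: rewrite the integrand
  have hrw : ∀ u ∈ Ioi (0:ℝ),
      (4 * π * u) ^ (-(n : ℝ) / 2) * E * Real.exp (-u) * Real.exp (-r ^ 2 / (4 * u)) / u
        = (E * Real.exp (-r) * (4*π) ^ (-(n:ℝ)/2)) * F u := by
    intro u hu
    have hu0 : (0:ℝ) < u := hu
    have h1 : (4 * π * u) ^ (-(n:ℝ)/2) = (4*π) ^ (-(n:ℝ)/2) * u ^ (-(n:ℝ)/2) :=
      Real.mul_rpow (by positivity) hu0.le
    have h2 : Real.exp (-u) * Real.exp (-r^2/(4*u)) =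
        Real.exp (-r) * Real.exp (-((2*u - r)^2/(4*u))) := by
      rw [← Real.exp_add, ← Real.exp_add]
      congr 1
      field_simp
      ring
    have h3 : u ^ (-(n:ℝ)/2) / u = u ^ (-s - 1) := by
      rw [div_eq_mul_inv, ← Real.rpow_neg_one u, ← Real.rpow_add hu0]
      congr 1
      rw [hsdef]; ring
    calc (4 * π * u) ^ (-(n : ℝ) / 2) * E * Real.exp (-u) * Real.exp (-r ^ 2 / (4 * u)) / u
        = (4*π) ^ (-(n:ℝ)/2) * E * (Real.exp (-u) * Real.exp (-r^2/(4*u))) *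
            (u ^ (-(n:ℝ)/2) / u) := by rw [h1]; ring
      _ = (E * Real.exp (-r) * (4*π) ^ (-(n:ℝ)/2)) * F u := by rw [h2, h3, hFdef]; ring
  rw [setIntegral_congr_fun measurableSet_Ioi hrw, integral_const_mul]
  -- reduce to the key estimate
  have hEr : Real.exp (-x ⟨0, hn⟩ - y ⟨0, hn⟩ - r) = E * Real.exp (-r) := by
    rw [hEdef, ← Real.exp_add]
    congr 1
  have hkey : (4*π) ^ (-(n:ℝ)/2) * ∫ u in Ioi (0:ℝ), F u ≤
      (Real.Gamma s * 16 ^ s + 4 ^ (s+1) * Real.sqrt π + 4 ^ (s+2)) * r ^ q := by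
    have h4pi : (4*π) ^ (-(n:ℝ)/2) ≤ 1 :=
      Real.rpow_le_one_of_one_le_of_nonpos (by nlinarith [pi_gt_three])
        (by linarith [Nat.cast_nonneg (α := ℝ) n])
    have hFnn : ∀ u ∈ Ioi (0:ℝ), 0 ≤ F u := fun u hu =>
      mul_nonneg (Real.rpow_nonneg (le_of_lt hu) _) (Real.exp_pos _).le
    have hFint_nonneg : 0 ≤ ∫ u in Ioi (0:ℝ), F u := setIntegral_nonneg measurableSet_Ioi hFnn
    have hmain := key_est s r q hs hr1 hq.1 hq.2.1 hq.2.2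
    calc (4*π) ^ (-(n:ℝ)/2) * ∫ u in Ioi (0:ℝ), F u
        ≤ 1 * ∫ u in Ioi (0:ℝ), F u := mul_le_mul_of_nonneg_right h4pi hFint_nonneg
      _ = ∫ u in Ioi (0:ℝ), F u := one_mul _
      _ ≤ _ := hmain
  calc E * Real.exp (-r) * (4*π) ^ (-(n:ℝ)/2) * ∫ u in Ioi (0:ℝ), F u
      = E * Real.exp (-r) * ((4*π) ^ (-(n:ℝ)/2) * ∫ u in Ioi (0:ℝ), F u) := by ring
    _ ≤ E * Real.exp (-r) *
        ((Real.Gamma s * 16 ^ s + 4 ^ (s+1) * Real.sqrt π + 4 ^ (s+2)) * r ^ q) := by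
        apply mul_le_mul_of_nonneg_left hkey
        positivity
    _ = (Real.Gamma s * 16 ^ s + 4 ^ (s+1) * Real.sqrt π + 4 ^ (s+2)) *
        Real.exp (-x ⟨0, hn⟩ - y ⟨0, hn⟩ - r) * r ^ q := by rw [hEr]; ring
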